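/- Assume pr is exchangeable and satisfies weak projectability for G. Then for any a ∈ U and 1 ≤ k ≤ N (with all relevant events contingent): pr(H | Exact(k,U,F) ∧ F_a ∧ G_a) > pr(H | Exact(k,U,F)), pr(H | Exact(k,U,F) ∧ ¬F_a ∧ G_a) ≥ pr(H | Exact(k,U,F)), and pr(H | Exact(k,U,F) ∧ ¬F_a ∧ ¬G_a) ≤ pr(H | Exact(k,U,F)). -/

import Mathlib

open MeasureTheory ProbabilityTheory

/-- Complete description vectors: each individual is assigned whether it is `F`
(first component) and whether it is `G` (second component). -/
abbrev CDV (N : ℕ) := Fin N → Bool × Bool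

/-- The event that individual `b` satisfies `F`. -/
def Fev {N : ℕ} (b : Fin N) : Set (CDV N) := {ω | (ω b).1 = true}

/-- The event that individual `b` satisfies `G`. -/
def Gev {N : ℕ} (b : Fin N) : Set (CDV N) := {ω | (ω b).2 = true}

/-- The hypothesis `H`: every individual satisfying `F` also satisfies `G`. -/
def Hyp (N : ℕ) : Set (CDV N) := {ω | ∀ b : Fin N, (ω b).1 = true → (ω b).2 = true}


open MeasureTheory ProbabilityTheory

/-- The event `Z_{(C,F)}`: exactly the individuals in `C` satisfy `F`. -/
def Zev {N : ℕ} (C : Finset (Fin N)) : Set (CDV N) :=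
  {ω | ∀ b : Fin N, ((ω b).1 = true ↔ b ∈ C)}

/-- The event `Exact(k, U, F)`: exactly `k` individuals of the universe satisfy `F`. -/
def ExactEv (N k : ℕ) : Set (CDV N) :=
  ⋃ C ∈ Finset.univ.powersetCard k, Zev (N := N) C

/-- Substitution of a permutation `π` into propositions, replacing each individual `b`
by `π b`: `ρ^π = permCDV π ⁻¹' ρ`. -/
def permCDV {N : ℕ} (π : Equiv.Perm (Fin N)) : CDV N → CDV N :=
  fun ω b => ω (π b)

/-- The twelve single-individual predicates allowed in the class `Δ`
(`F`, `¬F`, `G`, `¬G`, the complete descriptions `F̄Ḡ`, `F̄G`, `FḠ`, `FG`,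
their relevant negations including `F→G = ¬FḠ`), together with the trivial
predicate (for undescribed individuals). -/
def allowedPreds : Set (Set (Bool × Bool)) :=
  { Set.univ,
    {p | p.1 = true}, {p | p.1 = false},
    {p | p.2 = true}, {p | p.2 = false},
    {p | p.1 = false ∧ p.2 = false}, {p | ¬(p.1 = false ∧ p.2 = false)},
    {p | p.1 = false ∧ p.2 = true}, {p | ¬(p.1 = false ∧ p.2 = true)},
    {p | p.1 = true ∧ p.2 = false},
    {p | p.1 = true → p.2 = true},
    {p | p.1 = true ∧ p.2 = true}, {p | ¬(p.1 = true ∧ p.2 = true)} }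

/-- The class `Δ` of admissible backgrounds: conjunctions of allowed
single-individual predicates, each about a distinct individual
(hence not linking properties of distinct individuals). -/
def IsDelta {N : ℕ} (D : Set (CDV N)) : Prop :=
  ∃ A : Fin N → Set (Bool × Bool),
    (∀ b, A b ∈ allowedPreds) ∧ D = {ω | ∀ b, ω b ∈ A b}

namespace ExactPJ

variable {N : ℕ}

lemma measSet (s : Set (CDV N)) : MeasurableSet s := s.to_countable.measurableSet

/-- canonical witness -/
def wit (C : Finset (Fin N)) (g : Fin N → Bool) : CDV N := fun b => (decide (b ∈ C), g b)

lemma wit_Z (C : Finset (Fin N)) (g : Fin N → Bool) : wit C g ∈ Zev C := by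
  intro b; simp [wit]

def GS (S : Finset (Fin N)) : Set (CDV N) := {ω | ∀ b ∈ S, (ω b).2 = true}

lemma GS_empty : GS (∅ : Finset (Fin N)) = Set.univ := by ext ω; simp [GS]

lemma GS_insert (b : Fin N) (S : Finset (Fin N)) :
    GS (insert b S) = Gev b ∩ GS S := by
  ext ω; simp [GS, Gev, Finset.forall_mem_insert]

lemma ne_ZGS (C S : Finset (Fin N)) : (Zev C ∩ GS S).Nonempty :=
  ⟨wit C (fun _ => true), wit_Z C _, fun b _ => rfl⟩

lemma ne_GZGS (a : Fin N) (C S : Finset (Fin N)) :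
    (Gev a ∩ (Zev C ∩ GS S)).Nonempty :=
  ⟨wit C (fun _ => true), rfl, wit_Z C _, fun b _ => rfl⟩

lemma ne_ZGc (C : Finset (Fin N)) (a : Fin N) : (Zev C ∩ (Gev a)ᶜ).Nonempty := by
  refine ⟨wit C (fun b => decide (b ≠ a)), wit_Z C _, ?_⟩
  simp [wit, Gev]

lemma ne_ZG (C : Finset (Fin N)) (a : Fin N) : (Zev C ∩ Gev a).Nonempty :=
  ⟨wit C (fun _ => true), wit_Z C _, rfl⟩

lemma Zev_inter_Hyp (C : Finset (Fin N)) : Zev C ∩ Hyp N = Zev C ∩ GS C := by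
  ext ω
  constructor
  · rintro ⟨hz, hh⟩
    exact ⟨hz, fun b hb => hh b ((hz b).mpr hb)⟩
  · rintro ⟨hz, hg⟩
    exact ⟨hz, fun b h1 => hg b ((hz b).mp h1)⟩

/-! ### permutation preimages -/

lemma mem_image_perm {π : Equiv.Perm (Fin N)} {C : Finset (Fin N)} {c : Fin N} :
    c ∈ C.image π ↔ π.symm c ∈ C := by
  constructor
  · intro h
    obtain ⟨b, hb, rfl⟩ := Finset.mem_image.mp h
    simpa using hb
  · intro h
    exact Finset.mem_image.mpr ⟨π.symm c, h, by simp⟩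

lemma pre_Zev (π : Equiv.Perm (Fin N)) (C : Finset (Fin N)) :
    permCDV π ⁻¹' Zev C = Zev (C.image π) := by
  ext ω
  constructor
  · intro h c
    have h1 := h (π.symm c)
    simp only [permCDV, Equiv.apply_symm_apply] at h1
    rw [mem_image_perm]
    exact h1
  · intro h b
    have h1 := h (π b)
    rw [mem_image_perm, Equiv.symm_apply_apply] at h1
    exact h1

lemma pre_Gev (π : Equiv.Perm (Fin N)) (c : Fin N) :
    permCDV π ⁻¹' Gev c = Gev (π c) := rfl

lemma pre_Hyp (π : Equiv.Perm (Fin N)) : permCDV π ⁻¹' Hyp N = Hyp N := by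
  ext ω
  constructor
  · intro h b
    have := h (π.symm b)
    simpa [permCDV] using this
  · intro h b
    exact h (π b)

/-! ### existence of permutations -/

lemma swap_mem_iff {C : Finset (Fin N)} {u v : Fin N} (huv : (u ∈ C) ↔ (v ∈ C))
    (x : Fin N) : Equiv.swap u v x ∈ C ↔ x ∈ C := by
  rcases eq_or_ne x u with rfl | hxu
  · rw [Equiv.swap_apply_left]; exact huv.symm
  rcases eq_or_ne x v with rfl | hxv
  · rw [Equiv.swap_apply_right]; exact huv
  · rw [Equiv.swap_apply_of_ne_of_ne hxu hxv]

lemma exists_perm (C C' : Finset (Fin N)) (h : C.card = C'.card) :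
    ∃ π : Equiv.Perm (Fin N), ∀ b, π b ∈ C' ↔ b ∈ C := by
  have h1 : Fintype.card {x // x ∈ C} = Fintype.card {x // x ∈ C'} := by
    simp [Fintype.card_coe, h]
  have h2 : Fintype.card {x : Fin N // ¬ x ∈ C} = Fintype.card {x : Fin N // ¬ x ∈ C'} := by
    rw [Fintype.card_subtype_compl, Fintype.card_subtype_compl, h1]
  let e1 := Fintype.equivOfCardEq h1
  let e2 := Fintype.equivOfCardEq h2
  refine ⟨(Equiv.sumCompl (· ∈ C)).symm.trans ((e1.sumCongr e2).trans
      (Equiv.sumCompl (· ∈ C'))), ?_⟩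
  intro b
  by_cases hb : b ∈ C
  · have hs : (Equiv.sumCompl (· ∈ C)).symm b = Sum.inl ⟨b, hb⟩ := by
      rw [Equiv.symm_apply_eq, Equiv.sumCompl_apply_inl]
    simp only [Equiv.trans_apply, hs, Equiv.sumCongr_apply, Sum.map_inl,
      Equiv.sumCompl_apply_inl]
    exact iff_of_true (e1 ⟨b, hb⟩).2 hb
  · have hs : (Equiv.sumCompl (· ∈ C)).symm b = Sum.inr ⟨b, hb⟩ := by
      rw [Equiv.symm_apply_eq, Equiv.sumCompl_apply_inr]
    simp only [Equiv.trans_apply, hs, Equiv.sumCongr_apply, Sum.map_inr,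
      Equiv.sumCompl_apply_inr]
    exact iff_of_false (e2 ⟨b, hb⟩).2 hb

lemma exists_perm_image (C C' : Finset (Fin N)) (h : C.card = C'.card) :
    ∃ π : Equiv.Perm (Fin N), C.image π = C' := by
  obtain ⟨π, hπ⟩ := exists_perm C C' h
  refine ⟨π, ?_⟩
  ext x
  rw [mem_image_perm]
  have h2 := hπ (π.symm x)
  rw [π.apply_symm_apply] at h2
  exact h2.symm

lemma exists_perm_fix (C C' : Finset (Fin N)) (h : C.card = C'.card) (a : Fin N)
    (ha : a ∈ C ↔ a ∈ C') :
    ∃ π : Equiv.Perm (Fin N), C.image π = C' ∧ π a = a := by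
  obtain ⟨π₀, hπ⟩ := exists_perm C C' h
  have hmem : (π₀ a ∈ C') ↔ (a ∈ C') := (hπ a).trans ha
  refine ⟨π₀.trans (Equiv.swap (π₀ a) a), ?_, by simp⟩
  ext x
  simp only [Finset.mem_image, Equiv.trans_apply]
  constructor
  · rintro ⟨b, hb, rfl⟩
    exact (swap_mem_iff hmem _).mpr ((hπ b).mpr hb)
  · intro hx
    refine ⟨π₀.symm (Equiv.swap (π₀ a) a x), ?_, by simp⟩
    have h1 : Equiv.swap (π₀ a) a x ∈ C' := (swap_mem_iff hmem x).mpr hx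
    have h2 := hπ (π₀.symm (Equiv.swap (π₀ a) a x))
    rw [π₀.apply_symm_apply] at h2
    exact h2.mp h1

end ExactPJ

namespace ExactPJ

variable {N : ℕ} (μ : Measure (CDV N)) [IsProbabilityMeasure μ]

lemma cond_ne_top (s t : Set (CDV N)) : μ[t | s] ≠ ⊤ := by
  rw [cond_apply (measSet s)]
  rcases eq_or_ne (μ s) 0 with h | h
  · have h0 : μ (s ∩ t) = 0 := measure_mono_null Set.inter_subset_left h
    simp [h0]
  · exact ENNReal.mul_ne_top (ENNReal.inv_ne_top.mpr h) (measure_ne_top μ _)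

lemma cond_toReal (s t : Set (CDV N)) :
    (μ[t | s]).toReal = (μ (s ∩ t)).toReal / (μ s).toReal := by
  rw [cond_apply (measSet s), ENNReal.toReal_mul, ENNReal.toReal_inv, inv_mul_eq_div]

lemma pos_toReal {s : Set (CDV N)} (h : μ s ≠ 0) : 0 < (μ s).toReal :=
  ENNReal.toReal_pos h (measure_ne_top μ s)

lemma split_toReal (s t : Set (CDV N)) :
    (μ s).toReal = (μ (s ∩ t)).toReal + (μ (s ∩ tᶜ)).toReal := by
  rw [← ENNReal.toReal_add (measure_ne_top μ _) (measure_ne_top μ _)]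
  congr 1
  have h := measure_inter_add_diff (μ := μ) s (measSet t)
  rw [Set.diff_eq] at h
  exact h.symm

lemma cond_biUnion {ι : Type} (I : Finset ι) (s : ι → Set (CDV N)) (t : Set (CDV N))
    (hdisj : (I : Set ι).PairwiseDisjoint s)
    (h0 : ∀ i ∈ I, μ (s i) ≠ 0) (hU : μ (⋃ i ∈ I, s i) ≠ 0)
    (r : ENNReal) (hr : ∀ i ∈ I, μ[t | s i] = r) :
    μ[t | ⋃ i ∈ I, s i] = r := by
  have hmeas : ∀ i ∈ I, MeasurableSet (s i) := fun i _ => measSet _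
  have key : ∀ i ∈ I, μ (s i ∩ t) = r * μ (s i) := by
    intro i hi
    have h := cond_apply (measSet (s i)) μ t
    rw [hr i hi] at h
    calc μ (s i ∩ t) = μ (s i ∩ t) * ((μ (s i))⁻¹ * μ (s i)) := by
          rw [ENNReal.inv_mul_cancel (h0 i hi) (measure_ne_top μ _), mul_one]
      _ = ((μ (s i))⁻¹ * μ (s i ∩ t)) * μ (s i) := by ring
      _ = r * μ (s i) := by rw [← h]
  have hsum1 : μ (⋃ i ∈ I, s i) = ∑ i ∈ I, μ (s i) :=
    measure_biUnion_finset hdisj hmeas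
  have hint : (⋃ i ∈ I, s i) ∩ t = ⋃ i ∈ I, (s i ∩ t) := Set.iUnion₂_inter _ _
  have hdisj' : (I : Set ι).PairwiseDisjoint (fun i => s i ∩ t) :=
    hdisj.mono (fun i => Set.inter_subset_left)
  have hsum2 : μ (⋃ i ∈ I, (s i ∩ t)) = ∑ i ∈ I, μ (s i ∩ t) :=
    measure_biUnion_finset hdisj' (fun i _ => measSet _)
  rw [cond_apply (measSet _) μ t, hint, hsum2, Finset.sum_congr rfl key,
    ← Finset.mul_sum, ← hsum1, mul_comm r, ← mul_assoc,
    ENNReal.inv_mul_cancel hU (measure_ne_top μ _), one_mul]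

lemma isDelta_ZGS (C S : Finset (Fin N)) : IsDelta (Zev C ∩ GS S) := by
  refine ⟨fun b => if b ∈ S then
      (if b ∈ C then {p | p.1 = true ∧ p.2 = true} else {p | p.1 = false ∧ p.2 = true})
    else (if b ∈ C then {p | p.1 = true} else {p | p.1 = false}), ?_, ?_⟩
  · intro b
    by_cases h1 : b ∈ S <;> by_cases h2 : b ∈ C <;>
      simp only [h1, h2, if_true, if_false, allowedPreds, Set.mem_insert_iff,
        Set.mem_singleton_iff] <;> tauto
  · ext ω
    simp only [Set.mem_inter_iff, Set.mem_setOf_eq, Zev, GS]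
    constructor
    · rintro ⟨hz, hg⟩ b
      have hzb := hz b
      by_cases h1 : b ∈ S <;> by_cases h2 : b ∈ C <;>
        simp only [h1, h2, if_true, if_false, Set.mem_setOf_eq, iff_true, iff_false,
          Bool.not_eq_true] at hzb ⊢ <;>
        first
        | exact ⟨hzb, hg b h1⟩
        | exact hzb
    · intro h
      constructor
      · intro b
        have hb := h b
        by_cases h1 : b ∈ S <;> by_cases h2 : b ∈ C <;>
          simp only [h1, h2, if_true, if_false, Set.mem_setOf_eq, Bool.not_eq_true] at hb <;>
          simp only [h2, iff_true, iff_false, Bool.not_eq_true] <;>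
          first
          | exact hb.1
          | exact hb
      · intro b hb
        have h1 := h b
        by_cases h2 : b ∈ C <;>
          simp only [hb, h2, if_true, if_false, Set.mem_setOf_eq] at h1 <;>
          exact h1.2

end ExactPJ

namespace ExactPJ

variable {N : ℕ} (μ : Measure (CDV N)) [IsProbabilityMeasure μ]

/-- Claim 2: conditioning additionally on `G a` does not lower the probability of `H`,
given `Zev C`.  Holds for every `C` and `a`. -/
lemma claim2
    (hPJ : ∀ (A : Set (Bool × Bool)) (a b : Fin N) (D : Set (CDV N)),
      IsDelta D → μ D ≠ 0 → μ ({ω | ω a ∈ A} ∩ D) ≠ 0 →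
      μ[{ω : CDV N | ω b ∈ A} | {ω : CDV N | ω a ∈ A} ∩ D] ≥ μ[{ω : CDV N | ω b ∈ A} | D])
    (hCournot : ∀ s : Set (CDV N), s.Nonempty → μ s ≠ 0)
    (C : Finset (Fin N)) (a : Fin N) :
    μ[Hyp N | Zev C ∩ Gev a] ≥ μ[Hyp N | Zev C] := by
  have main : ∀ S : Finset (Fin N),
      (μ (Gev a ∩ (Zev C ∩ GS S))).toReal * (μ (Zev C)).toReal ≥
      (μ (Zev C ∩ GS S)).toReal * (μ (Gev a ∩ Zev C)).toReal := by
    intro S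
    induction S using Finset.induction_on with
    | empty =>
      rw [GS_empty, Set.inter_univ]
      exact ge_of_eq (by ring)
    | @insert b S hbS ih =>
      have hD0 : μ (Zev C ∩ GS S) ≠ 0 := hCournot _ (ne_ZGS C S)
      have hGa0 : μ (Gev a ∩ (Zev C ∩ GS S)) ≠ 0 := hCournot _ (ne_GZGS a C S)
      have hpj := hPJ {p | p.2 = true} a b (Zev C ∩ GS S) (isDelta_ZGS C S) hD0 hGa0
      have h1 : (μ[Gev b | Gev a ∩ (Zev C ∩ GS S)]).toReal ≥
          (μ[Gev b | Zev C ∩ GS S]).toReal :=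
        (ENNReal.toReal_le_toReal (cond_ne_top μ _ _) (cond_ne_top μ _ _)).mpr hpj
      rw [cond_toReal, cond_toReal] at h1
      have e1 : (Gev a ∩ (Zev C ∩ GS S)) ∩ Gev b = Gev a ∩ (Zev C ∩ GS (insert b S)) := by
        rw [GS_insert]; ext ω
        simp only [Set.mem_inter_iff]; tauto
      have e2 : (Zev C ∩ GS S) ∩ Gev b = Zev C ∩ GS (insert b S) := by
        rw [GS_insert]; ext ω
        simp only [Set.mem_inter_iff]; tauto
      rw [e1, e2] at h1
      have hp : 0 < (μ (Gev a ∩ (Zev C ∩ GS S))).toReal := pos_toReal μ hGa0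
      have hq : 0 < (μ (Zev C ∩ GS S)).toReal := pos_toReal μ hD0
      rw [ge_iff_le, div_le_div_iff₀ hq hp] at h1
      -- h1 : ν(Z∩GS (insert b S)) * ν(Ga∩(Z∩GS S)) ≤ ν(Ga∩(Z∩GS (insert b S))) * ν(Z∩GS S)
      set p' := (μ (Gev a ∩ (Zev C ∩ GS (insert b S)))).toReal
      set q' := (μ (Zev C ∩ GS (insert b S))).toReal
      set p := (μ (Gev a ∩ (Zev C ∩ GS S))).toReal
      set q := (μ (Zev C ∩ GS S)).toReal
      set z := (μ (Zev C)).toReal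
      set w := (μ (Gev a ∩ Zev C)).toReal
      have hq'0 : 0 ≤ q' := ENNReal.toReal_nonneg
      have hw0 : 0 ≤ w := ENNReal.toReal_nonneg
      have hmul : (q' * w) * (p * q) ≤ (p' * z) * (p * q) := by
        have h2 : (q' * p) * (q * w) ≤ (p' * q) * (p * z) :=
          mul_le_mul h1 ih (by positivity) (by positivity)
        nlinarith [h2]
      exact (mul_le_mul_iff_left₀ (by positivity)).mp hmul
  -- transfer to conditional probabilities
  rw [ge_iff_le, ← ENNReal.toReal_le_toReal (cond_ne_top μ _ _) (cond_ne_top μ _ _)]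
  rw [cond_toReal, cond_toReal]
  have hZ0 : μ (Zev C) ≠ 0 := hCournot _ ⟨wit C (fun _ => true), wit_Z C _⟩
  have hZG0 : μ (Zev C ∩ Gev a) ≠ 0 := hCournot _ (ne_ZG C a)
  rw [div_le_div_iff₀ (pos_toReal μ hZ0) (pos_toReal μ hZG0)]
  have e3 : (Zev C ∩ Gev a) ∩ Hyp N = Gev a ∩ (Zev C ∩ GS C) := by
    rw [Set.inter_right_comm, Zev_inter_Hyp]
    exact Set.inter_comm _ _
  have e4 : Zev C ∩ Gev a = Gev a ∩ Zev C := Set.inter_comm _ _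
  rw [Zev_inter_Hyp, e3, e4]
  have := main C
  nlinarith [this]

/-- Claim 1: if `a ∈ C`, a strict increase. -/
lemma claim1
    (hCournot : ∀ s : Set (CDV N), s.Nonempty → μ s ≠ 0)
    (C : Finset (Fin N)) (a : Fin N) (haC : a ∈ C) :
    μ[Hyp N | Zev C ∩ Gev a] > μ[Hyp N | Zev C] := by
  have hsub : Zev C ∩ Hyp N ⊆ Gev a := by
    rintro ω ⟨hz, hh⟩
    exact hh a ((hz a).mpr haC)
  have e1 : (Zev C ∩ Gev a) ∩ Hyp N = Zev C ∩ Hyp N := by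
    rw [Set.inter_right_comm]
    exact Set.inter_eq_self_of_subset_left hsub
  have hZH0 : μ (Zev C ∩ Hyp N) ≠ 0 := by
    rw [Zev_inter_Hyp]; exact hCournot _ (ne_ZGS C C)
  have hZG0 : μ (Zev C ∩ Gev a) ≠ 0 := hCournot _ (ne_ZG C a)
  have hZGc0 : μ (Zev C ∩ (Gev a)ᶜ) ≠ 0 := hCournot _ (ne_ZGc C a)
  rw [gt_iff_lt, ← ENNReal.toReal_lt_toReal (cond_ne_top μ _ _) (cond_ne_top μ _ _),
    cond_toReal, cond_toReal, e1]
  have hlt : (μ (Zev C ∩ Gev a)).toReal < (μ (Zev C)).toReal := by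
    rw [split_toReal μ (Zev C) (Gev a)]
    nlinarith [pos_toReal μ hZGc0]
  exact div_lt_div_of_pos_left (pos_toReal μ hZH0) (pos_toReal μ hZG0) hlt

/-- Claim 3: conditioning on `¬ G a` does not raise the probability of `H`. -/
lemma claim3
    (hPJ : ∀ (A : Set (Bool × Bool)) (a b : Fin N) (D : Set (CDV N)),
      IsDelta D → μ D ≠ 0 → μ ({ω | ω a ∈ A} ∩ D) ≠ 0 →
      μ[{ω : CDV N | ω b ∈ A} | {ω : CDV N | ω a ∈ A} ∩ D] ≥ μ[{ω : CDV N | ω b ∈ A} | D])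
    (hCournot : ∀ s : Set (CDV N), s.Nonempty → μ s ≠ 0)
    (C : Finset (Fin N)) (a : Fin N) :
    μ[Hyp N | Zev C ∩ (Gev a)ᶜ] ≤ μ[Hyp N | Zev C] := by
  have h2 := claim2 μ hPJ hCournot C a
  rw [← ENNReal.toReal_le_toReal (cond_ne_top μ _ _) (cond_ne_top μ _ _),
    cond_toReal, cond_toReal]
  have hZ0 : μ (Zev C) ≠ 0 := hCournot _ ⟨wit C (fun _ => true), wit_Z C _⟩
  have hB1 : 0 < (μ (Zev C ∩ Gev a)).toReal := pos_toReal μ (hCournot _ (ne_ZG C a))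
  have hB2 : 0 < (μ (Zev C ∩ (Gev a)ᶜ)).toReal := pos_toReal μ (hCournot _ (ne_ZGc C a))
  rw [div_le_div_iff₀ hB2 (pos_toReal μ hZ0)]
  have h2r : (μ[Hyp N | Zev C ∩ Gev a]).toReal ≥ (μ[Hyp N | Zev C]).toReal :=
    (ENNReal.toReal_le_toReal (cond_ne_top μ _ _) (cond_ne_top μ _ _)).mpr h2
  rw [cond_toReal, cond_toReal, ge_iff_le,
    div_le_div_iff₀ (pos_toReal μ hZ0) hB1] at h2r
  have e1 : (Zev C ∩ Gev a) ∩ Hyp N = (Zev C ∩ Hyp N) ∩ Gev a := Set.inter_right_comm _ _ _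
  have e2 : (Zev C ∩ (Gev a)ᶜ) ∩ Hyp N = (Zev C ∩ Hyp N) ∩ (Gev a)ᶜ := Set.inter_right_comm _ _ _
  rw [e1] at h2r
  rw [e2]
  have s1 : (μ (Zev C)).toReal
      = (μ (Zev C ∩ Gev a)).toReal + (μ (Zev C ∩ (Gev a)ᶜ)).toReal := split_toReal μ _ _
  have s2 : (μ (Zev C ∩ Hyp N)).toReal
      = (μ ((Zev C ∩ Hyp N) ∩ Gev a)).toReal + (μ ((Zev C ∩ Hyp N) ∩ (Gev a)ᶜ)).toReal :=
    split_toReal μ _ _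
  have hA1 : 0 ≤ (μ ((Zev C ∩ Hyp N) ∩ Gev a)).toReal := ENNReal.toReal_nonneg
  have hA2 : 0 ≤ (μ ((Zev C ∩ Hyp N) ∩ (Gev a)ᶜ)).toReal := ENNReal.toReal_nonneg
  nlinarith [h2r, s1, s2, hB1, hB2, hA1, hA2]

end ExactPJ

namespace ExactPJ

variable {N : ℕ} (μ : Measure (CDV N)) [IsProbabilityMeasure μ]

lemma Zev_disjoint {C C' : Finset (Fin N)} (h : C ≠ C') : Disjoint (Zev C) (Zev C') :=
  Set.disjoint_left.mpr fun _ h1 h2 => h (Finset.ext fun x => (h1 x).symm.trans (h2 x))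

lemma cond_Zev_eq
    (hexch : ∀ (A B : Set (CDV N)) (π : Equiv.Perm (Fin N)),
      μ[A | B] = μ[permCDV π ⁻¹' A | permCDV π ⁻¹' B])
    (C C' : Finset (Fin N)) (h : C.card = C'.card) :
    μ[Hyp N | Zev C] = μ[Hyp N | Zev C'] := by
  obtain ⟨π, hπ⟩ := exists_perm_image C C' h
  have h1 := hexch (Hyp N) (Zev C) π
  rwa [pre_Hyp, pre_Zev, hπ] at h1

lemma cond_ZevG_eq
    (hexch : ∀ (A B : Set (CDV N)) (π : Equiv.Perm (Fin N)),
      μ[A | B] = μ[permCDV π ⁻¹' A | permCDV π ⁻¹' B])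
    (C C' : Finset (Fin N)) (a : Fin N) (h : C.card = C'.card) (ha : (a ∈ C) ↔ (a ∈ C')) :
    μ[Hyp N | Zev C ∩ Gev a] = μ[Hyp N | Zev C' ∩ Gev a] := by
  obtain ⟨π, hπ, hπa⟩ := exists_perm_fix C C' h a ha
  have h1 := hexch (Hyp N) (Zev C ∩ Gev a) π
  rwa [pre_Hyp, Set.preimage_inter, pre_Zev, pre_Gev, hπ, hπa] at h1

lemma cond_ZevGc_eq
    (hexch : ∀ (A B : Set (CDV N)) (π : Equiv.Perm (Fin N)),
      μ[A | B] = μ[permCDV π ⁻¹' A | permCDV π ⁻¹' B])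
    (C C' : Finset (Fin N)) (a : Fin N) (h : C.card = C'.card) (ha : (a ∈ C) ↔ (a ∈ C')) :
    μ[Hyp N | Zev C ∩ (Gev a)ᶜ] = μ[Hyp N | Zev C' ∩ (Gev a)ᶜ] := by
  obtain ⟨π, hπ, hπa⟩ := exists_perm_fix C C' h a ha
  have h1 := hexch (Hyp N) (Zev C ∩ (Gev a)ᶜ) π
  rwa [pre_Hyp, Set.preimage_inter, Set.preimage_compl, pre_Zev, pre_Gev, hπ, hπa] at h1

end ExactPJ

open ExactPJ


/-- Theorem 5: for an exchangeable measure satisfying weak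
projectability, with background knowledge `Exact(k,U,F)`:
a black raven (`F_a ∧ G_a`) strictly confirms `H`, a black non-raven (`¬F_a ∧ G_a`)
does not disconfirm `H`, and a non-black non-raven (`¬F_a ∧ ¬G_a`) does not confirm `H`. -/
theorem exact_pj_nicod {N k : ℕ} (hk1 : 1 ≤ k) (hk2 : k ≤ N)
    (μ : Measure (CDV N)) [IsProbabilityMeasure μ]
    -- exchangeability: pr(A | B) = pr(A^π | B^π)
    (hexch : ∀ (A B : Set (CDV N)) (π : Equiv.Perm (Fin N)),
      μ[A | B] = μ[permCDV π ⁻¹' A | permCDV π ⁻¹' B])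
    -- weak projectability (PJ) for single-individual predicates, in particular for G
    (hPJ : ∀ (A : Set (Bool × Bool)) (a b : Fin N) (D : Set (CDV N)),
      IsDelta D → μ D ≠ 0 → μ ({ω | ω a ∈ A} ∩ D) ≠ 0 →
      μ[{ω : CDV N | ω b ∈ A} | {ω : CDV N | ω a ∈ A} ∩ D] ≥ μ[{ω : CDV N | ω b ∈ A} | D])
    -- Cournot's principle: contingent events have positive probability
    (hCournot : ∀ s : Set (CDV N), s.Nonempty → μ s ≠ 0)
    (a : Fin N)
    -- all relevant (conditioning) events are contingent
    (hc1 : (ExactEv N k ∩ (Fev a ∩ Gev a)).Nonempty)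
    (hc2 : (ExactEv N k ∩ ((Fev a)ᶜ ∩ Gev a)).Nonempty)
    (hc3 : (ExactEv N k ∩ ((Fev a)ᶜ ∩ (Gev a)ᶜ)).Nonempty) :
    μ[Hyp N | ExactEv N k ∩ (Fev a ∩ Gev a)] > μ[Hyp N | ExactEv N k] ∧
    μ[Hyp N | ExactEv N k ∩ ((Fev a)ᶜ ∩ Gev a)] ≥ μ[Hyp N | ExactEv N k] ∧
    μ[Hyp N | ExactEv N k ∩ ((Fev a)ᶜ ∩ (Gev a)ᶜ)] ≤ μ[Hyp N | ExactEv N k] := by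
  have hcard_erase : (Finset.univ.erase a).card = N - 1 := by
    rw [Finset.card_erase_of_mem (Finset.mem_univ a), Finset.card_univ, Fintype.card_fin]
  -- C₀ : a set of size k containing a
  obtain ⟨t, ht, htc⟩ := Finset.exists_subset_card_eq
    (show k - 1 ≤ (Finset.univ.erase a).card by omega)
  have hat : a ∉ t := fun h => (Finset.mem_erase.mp (ht h)).1 rfl
  set C₀ := insert a t with hC₀
  have hC₀card : C₀.card = k := by
    rw [hC₀, Finset.card_insert_of_notMem hat, htc]; omega
  have haC₀ : a ∈ C₀ := Finset.mem_insert_self a t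
  -- k < N, from hc2
  have hkN : k < N := by
    obtain ⟨ω, hωE, hωF, -⟩ := hc2
    obtain ⟨C, hC, hωC⟩ := Set.mem_iUnion₂.mp hωE
    have haC : a ∉ C := fun h => hωF ((hωC a).mpr h)
    have hsub : C ⊆ Finset.univ.erase a := fun x hx =>
      Finset.mem_erase.mpr ⟨fun he => haC (he ▸ hx), Finset.mem_univ x⟩
    have := Finset.card_le_card hsub
    rw [hcard_erase, Finset.mem_powersetCard_univ.mp hC] at this
    omega
  -- C₁ : a set of size k avoiding a
  obtain ⟨C₁, hC₁sub, hC₁card⟩ := Finset.exists_subset_card_eq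
    (show k ≤ (Finset.univ.erase a).card by omega)
  have haC₁ : a ∉ C₁ := fun h => (Finset.mem_erase.mp (hC₁sub h)).1 rfl
  -- disjointness of the pieces
  have hdisjZ : (((Finset.univ : Finset (Fin N)).powersetCard k : Finset (Finset (Fin N))) : Set (Finset (Fin N))).PairwiseDisjoint
      (Zev (N := N)) := fun C _ C' _ hne => Zev_disjoint hne
  have hEdef : ExactEv N k = ⋃ C ∈ Finset.univ.powersetCard k, Zev (N := N) C := rfl
  -- pr(H | E) = pr(H | Z_{C₀})
  have hA : μ[Hyp N | ExactEv N k] = μ[Hyp N | Zev C₀] := by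
    rw [hEdef]
    refine cond_biUnion μ _ _ _ hdisjZ
      (fun C _ => hCournot _ ⟨wit C (fun _ => true), wit_Z C _⟩) ?_ _
      (fun C hC => cond_Zev_eq μ hexch C C₀
        ((Finset.mem_powersetCard_univ.mp hC).trans hC₀card.symm))
    exact hCournot _ ⟨hc1.choose, hc1.choose_spec.1⟩
  -- decomposition of the three conditioning events
  have eB : ExactEv N k ∩ (Fev a ∩ Gev a) =
      ⋃ C ∈ (Finset.univ.powersetCard k).filter (a ∈ ·), (Zev C ∩ Gev a) := by
    ext ω
    constructor
    · rintro ⟨hE, hF, hG⟩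
      obtain ⟨C, hC, hωC⟩ := Set.mem_iUnion₂.mp hE
      exact Set.mem_iUnion₂.mpr ⟨C, Finset.mem_filter.mpr ⟨hC, (hωC a).mp hF⟩, hωC, hG⟩
    · intro h
      obtain ⟨C, hC, hωC, hG⟩ := Set.mem_iUnion₂.mp h
      obtain ⟨hC1, haC⟩ := Finset.mem_filter.mp hC
      exact ⟨Set.mem_iUnion₂.mpr ⟨C, hC1, hωC⟩, (hωC a).mpr haC, hG⟩
  have eC : ExactEv N k ∩ ((Fev a)ᶜ ∩ Gev a) =
      ⋃ C ∈ (Finset.univ.powersetCard k).filter (a ∉ ·), (Zev C ∩ Gev a) := by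
    ext ω
    constructor
    · rintro ⟨hE, hF, hG⟩
      obtain ⟨C, hC, hωC⟩ := Set.mem_iUnion₂.mp hE
      exact Set.mem_iUnion₂.mpr
        ⟨C, Finset.mem_filter.mpr ⟨hC, fun h => hF ((hωC a).mpr h)⟩, hωC, hG⟩
    · intro h
      obtain ⟨C, hC, hωC, hG⟩ := Set.mem_iUnion₂.mp h
      obtain ⟨hC1, haC⟩ := Finset.mem_filter.mp hC
      exact ⟨Set.mem_iUnion₂.mpr ⟨C, hC1, hωC⟩, fun h => haC ((hωC a).mp h), hG⟩
  have eD : ExactEv N k ∩ ((Fev a)ᶜ ∩ (Gev a)ᶜ) =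
      ⋃ C ∈ (Finset.univ.powersetCard k).filter (a ∉ ·), (Zev C ∩ (Gev a)ᶜ) := by
    ext ω
    constructor
    · rintro ⟨hE, hF, hG⟩
      obtain ⟨C, hC, hωC⟩ := Set.mem_iUnion₂.mp hE
      exact Set.mem_iUnion₂.mpr
        ⟨C, Finset.mem_filter.mpr ⟨hC, fun h => hF ((hωC a).mpr h)⟩, hωC, hG⟩
    · intro h
      obtain ⟨C, hC, hωC, hG⟩ := Set.mem_iUnion₂.mp h
      obtain ⟨hC1, haC⟩ := Finset.mem_filter.mp hC
      exact ⟨Set.mem_iUnion₂.mpr ⟨C, hC1, hωC⟩, fun h => haC ((hωC a).mp h), hG⟩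
  -- pr(H | E ∩ Fa ∩ Ga) = pr(H | Z_{C₀} ∩ Ga)
  have hB : μ[Hyp N | ExactEv N k ∩ (Fev a ∩ Gev a)] = μ[Hyp N | Zev C₀ ∩ Gev a] := by
    rw [eB]
    refine cond_biUnion μ _ _ _
      (fun C _ C' _ hne => (Zev_disjoint hne).mono Set.inter_subset_left Set.inter_subset_left)
      (fun C _ => hCournot _ (ne_ZG C a)) ?_ _ ?_
    · rw [← eB]; exact hCournot _ hc1
    · intro C hC
      obtain ⟨hC1, haC⟩ := Finset.mem_filter.mp hC
      exact cond_ZevG_eq μ hexch C C₀ a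
        ((Finset.mem_powersetCard_univ.mp hC1).trans hC₀card.symm) (iff_of_true haC haC₀)
  have hCq : μ[Hyp N | ExactEv N k ∩ ((Fev a)ᶜ ∩ Gev a)] = μ[Hyp N | Zev C₁ ∩ Gev a] := by
    rw [eC]
    refine cond_biUnion μ _ _ _
      (fun C _ C' _ hne => (Zev_disjoint hne).mono Set.inter_subset_left Set.inter_subset_left)
      (fun C _ => hCournot _ (ne_ZG C a)) ?_ _ ?_
    · rw [← eC]; exact hCournot _ hc2
    · intro C hC
      obtain ⟨hC1, haC⟩ := Finset.mem_filter.mp hC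
      exact cond_ZevG_eq μ hexch C C₁ a
        ((Finset.mem_powersetCard_univ.mp hC1).trans hC₁card.symm) (iff_of_false haC haC₁)
  have hD : μ[Hyp N | ExactEv N k ∩ ((Fev a)ᶜ ∩ (Gev a)ᶜ)] = μ[Hyp N | Zev C₁ ∩ (Gev a)ᶜ] := by
    rw [eD]
    refine cond_biUnion μ _ _ _
      (fun C _ C' _ hne => (Zev_disjoint hne).mono Set.inter_subset_left Set.inter_subset_left)
      (fun C _ => hCournot _ (ne_ZGc C a)) ?_ _ ?_
    · rw [← eD]; exact hCournot _ hc3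
    · intro C hC
      obtain ⟨hC1, haC⟩ := Finset.mem_filter.mp hC
      exact cond_ZevGc_eq μ hexch C C₁ a
        ((Finset.mem_powersetCard_univ.mp hC1).trans hC₁card.symm) (iff_of_false haC haC₁)
  have hA1 : μ[Hyp N | ExactEv N k] = μ[Hyp N | Zev C₁] :=
    hA.trans (cond_Zev_eq μ hexch C₀ C₁ (hC₀card.trans hC₁card.symm))
  refine ⟨?_, ?_, ?_⟩
  · rw [hB, hA]
    exact claim1 μ hCournot C₀ a haC₀
  · rw [hCq, hA1]
    exact claim2 μ hPJ hCournot C₁ a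
  · rw [hD, hA1]
    exact claim3 μ hPJ hCournot C₁ a
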